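/- Consider the optimization problem b̂ = argmin_b { l(b) + Σ_{i=1}^p λ_i |b|_{(i)} } with λ_1 ≥ ... ≥ λ_p ≥ 0, where l is convex and differentiable, and let U(b) = −∇l(b). If b̂_i ≠ 0 and the number of nonzero entries of b̂ equals r, then sgn(b̂_i) · U_i(b̂) ≥ λ_r; in particular |U_i(b̂)| ≥ λ_r and U_i(b̂) has the same sign as b̂_i whenever λ_r > 0. -/

import Mathlib

/-- The `i`-th largest absolute value of the coordinates of `b : Fin p → ℝ`
(0-indexed). -/
noncomputable def sortedAbs {p : ℕ} (b : Fin p → ℝ) (i : Fin p) : ℝ :=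
  |b (Tuple.sort (fun j => |b j|) i.rev)|

/-- `|b|₍ᵢ₎` with 1-based indexing `i ∈ {1,…,p}` (and `0` outside this range). -/
noncomputable def sAbs {p : ℕ} (b : Fin p → ℝ) (i : ℕ) : ℝ :=
  if h : 1 ≤ i ∧ i ≤ p then sortedAbs b ⟨i - 1, by omega⟩ else 0

section SlopeAux

open Finset

variable {p : ℕ}

noncomputable def eAbs (b : Fin p → ℝ) : Equiv.Perm (Fin p) :=
  Fin.revPerm.trans (Tuple.sort (fun j => |b j|))

lemma sortedAbs_eq (b : Fin p → ℝ) (j : Fin p) : sortedAbs b j = |b (eAbs b j)| := rfl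

lemma sortedAbs_nonneg (b : Fin p → ℝ) (j : Fin p) : 0 ≤ sortedAbs b j := abs_nonneg _

lemma sortedAbs_antitone (b : Fin p → ℝ) : Antitone (sortedAbs b) := by
  intro j k hjk
  exact Tuple.monotone_sort (fun j => |b j|) (Fin.rev_le_rev.mpr hjk)

lemma sum_sortedAbs (b : Fin p → ℝ) : ∑ j, sortedAbs b j = ∑ j, |b j| := by
  simp only [sortedAbs_eq]
  exact Equiv.sum_comp (eAbs b) (fun j => |b j|)

lemma card_filter_lt {k : ℕ} (hk : k ≤ p) :
    (Finset.univ.filter (fun j : Fin p => (j : ℕ) < k)).card = k := by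
  have : (Finset.univ.filter (fun j : Fin p => (j : ℕ) < k))
      = (Finset.range k).attachFin (fun m hm => lt_of_lt_of_le (Finset.mem_range.mp hm) hk) := by
    ext j; simp [Finset.mem_attachFin]
  rw [this, Finset.card_attachFin, Finset.card_range]

lemma sum_le_sum_sep {α : Type*} (s t : Finset α) (f : α → ℝ)
    (hcard : s.card ≤ t.card) (hle : ∀ x ∈ s, ∀ y ∈ t, f x ≤ f y)
    (hnn : ∀ y ∈ t, 0 ≤ f y) :
    ∑ x ∈ s, f x ≤ ∑ y ∈ t, f y := by
  rcases s.eq_empty_or_nonempty with hs | hs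
  · simp only [hs, Finset.sum_empty]
    exact Finset.sum_nonneg hnn
  · have ht : t.Nonempty := Finset.card_pos.mp (lt_of_lt_of_le (Finset.card_pos.mpr hs) hcard)
    obtain ⟨y0, hy0, hminy⟩ := t.exists_min_image f ht
    calc ∑ x ∈ s, f x ≤ s.card • f y0 :=
          Finset.sum_le_card_nsmul s f (f y0) (fun x hx => hle x hx y0 hy0)
      _ ≤ t.card • f y0 := by
          simp only [nsmul_eq_mul]
          exact mul_le_mul_of_nonneg_right (Nat.cast_le.mpr hcard) (hnn y0 hy0)
      _ ≤ ∑ y ∈ t, f y := Finset.card_nsmul_le_sum t f (f y0) hminy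

lemma sum_abs_le_topk (b : Fin p → ℝ) (A : Finset (Fin p)) :
    ∑ j ∈ A, |b j| ≤ ∑ j ∈ Finset.univ.filter (fun j : Fin p => (j : ℕ) < A.card),
      sortedAbs b j := by
  set k := A.card with hk
  have hkp : k ≤ p := by
    simpa using Finset.card_le_card (Finset.subset_univ A)
  set B := (Finset.univ.filter (fun j : Fin p => (j : ℕ) < k)).image (eAbs b) with hB
  have hsum : ∑ j ∈ B, |b j|
      = ∑ j ∈ Finset.univ.filter (fun j : Fin p => (j : ℕ) < k), sortedAbs b j := by
    rw [hB, Finset.sum_image (fun x _ y _ h => (eAbs b).injective h)]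
    exact Finset.sum_congr rfl fun j _ => (sortedAbs_eq b j).symm
  rw [← hsum]
  have key : ∀ x ∈ A \ B, ∀ y ∈ B \ A, |b x| ≤ |b y| := by
    intro x hx y hy
    have hxB : x ∉ B := (Finset.mem_sdiff.mp hx).2
    have hyB : y ∈ B := (Finset.mem_sdiff.mp hy).1
    obtain ⟨jy, hjy, rfl⟩ := Finset.mem_image.mp hyB
    have hjy' : (jy : ℕ) < k := by simpa using hjy
    have hxe : x = eAbs b ((eAbs b).symm x) := by simp
    have hjx' : ¬ (((eAbs b).symm x : ℕ) < k) := by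
      intro h
      exact hxB (Finset.mem_image.mpr ⟨(eAbs b).symm x, by simpa using h, by simp⟩)
    have hle : jy ≤ (eAbs b).symm x := by
      rw [Fin.le_def]; omega
    calc |b x| = sortedAbs b ((eAbs b).symm x) := by rw [sortedAbs_eq]; simp
      _ ≤ sortedAbs b jy := sortedAbs_antitone b hle
      _ = |b (eAbs b jy)| := sortedAbs_eq b jy
  have hcards : (A \ B).card ≤ (B \ A).card := by
    have h1 := Finset.card_inter_add_card_sdiff A B
    have h2 := Finset.card_inter_add_card_sdiff B A
    have hBcard : B.card = k := by
      rw [hB, Finset.card_image_of_injective _ (eAbs b).injective, card_filter_lt hkp]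
    rw [Finset.inter_comm] at h2
    omega
  have h1 : ∑ x ∈ A \ B, |b x| ≤ ∑ y ∈ B \ A, |b y| :=
    sum_le_sum_sep _ _ _ hcards key (fun y _ => abs_nonneg _)
  calc ∑ j ∈ A, |b j| = ∑ j ∈ A ∩ B, |b j| + ∑ j ∈ A \ B, |b j| :=
        (Finset.sum_inter_add_sum_sdiff _ _ _).symm
    _ ≤ ∑ j ∈ A ∩ B, |b j| + ∑ j ∈ B \ A, |b j| := by linarith
    _ = ∑ j ∈ B ∩ A, |b j| + ∑ j ∈ B \ A, |b j| := by rw [Finset.inter_comm]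
    _ = ∑ j ∈ B, |b j| := Finset.sum_inter_add_sum_sdiff _ _ _

lemma sortedAbs_eq_zero (b : Fin p → ℝ) (r : ℕ)
    (hr : r = (Finset.univ.filter (fun j => b j ≠ 0)).card) (j : Fin p) (hj : r ≤ (j : ℕ)) :
    sortedAbs b j = 0 := by
  by_contra h
  have hcard : (Finset.univ.filter (fun j : Fin p => sortedAbs b j ≠ 0)).card = r := by
    rw [hr]
    apply Finset.card_nbij (i := fun j => eAbs b j)
    · intro a ha
      simp only [Finset.coe_filter, Set.mem_setOf_eq, Finset.mem_filter, Finset.mem_univ, true_and] at ha ⊢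
      rw [sortedAbs_eq] at ha
      simpa using ha
    · exact fun x _ y _ hxy => (eAbs b).injective hxy
    · intro y hy
      simp only [Finset.coe_filter, Set.mem_setOf_eq, Finset.mem_univ, true_and] at hy ⊢
      refine ⟨(eAbs b).symm y, ?_, by simp⟩
      simp only [Set.mem_setOf_eq, sortedAbs_eq, Equiv.apply_symm_apply, abs_ne_zero]
      exact hy
  have hsub : Finset.Iic j ⊆ Finset.univ.filter (fun j' : Fin p => sortedAbs b j' ≠ 0) := by
    intro j' hj'
    simp only [Finset.mem_filter, Finset.mem_univ, true_and]
    have h1 : sortedAbs b j ≤ sortedAbs b j' := sortedAbs_antitone b (Finset.mem_Iic.mp hj')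
    have h0 : 0 < sortedAbs b j := lt_of_le_of_ne (sortedAbs_nonneg b j) (Ne.symm h)
    exact ne_of_gt (lt_of_lt_of_le h0 h1)
  have hle := Finset.card_le_card hsub
  rw [Fin.card_Iic, hcard] at hle
  omega




lemma sAbs_eq_sortedAbs (b : Fin p → ℝ) (j : Fin p) : sAbs b ((j : ℕ) + 1) = sortedAbs b j := by
  have h : 1 ≤ (j : ℕ) + 1 ∧ (j : ℕ) + 1 ≤ p := ⟨Nat.le_add_left _ _, j.isLt⟩
  rw [sAbs, dif_pos h]
  congr 1

lemma sum_Icc_sAbs (b : Fin p → ℝ) (g : ℕ → ℝ) {k : ℕ} (hk : k ≤ p) :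
    ∑ m ∈ Finset.Icc 1 k, g m * sAbs b m
      = ∑ j ∈ Finset.univ.filter (fun j : Fin p => (j : ℕ) < k),
          g ((j : ℕ) + 1) * sortedAbs b j := by
  refine Finset.sum_bij' (i := fun m hm => (⟨m - 1, by
      simp only [Finset.mem_Icc] at hm; omega⟩ : Fin p))
    (j := fun j _ => (j : ℕ) + 1) ?_ ?_ ?_ ?_ ?_
  · intro a ha
    simp only [Finset.mem_Icc] at ha
    simp only [Finset.mem_filter, Finset.mem_univ, true_and, Fin.val_mk]
    omega
  · intro a ha
    simp only [Finset.mem_filter, Finset.mem_univ, true_and] at ha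
    simp only [Finset.mem_Icc]
    omega
  · intro a ha
    simp only [Finset.mem_Icc] at ha
    show a - 1 + 1 = a
    omega
  · intro a _
    exact Fin.ext (by simp)
  · intro a ha
    simp only [Finset.mem_Icc] at ha
    have h1 : ((⟨a - 1, by omega⟩ : Fin p) : ℕ) + 1 = a := by
      simp only [Fin.val_mk]; omega
    rw [h1, sAbs, dif_pos ⟨ha.1, le_trans ha.2 hk⟩]

lemma tele (lam : ℕ → ℝ) (p : ℕ) :
    ∀ d m, 1 ≤ m → p = m + d →
    ∑ k ∈ Finset.Icc m p, (lam k - if k < p then lam (k + 1) else 0) = lam m := by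
  intro d
  induction d with
  | zero =>
    intro m h1 h2
    subst h2
    simp
  | succ d ih =>
    intro m h1 h2
    have hmp : m < p := by omega
    have hins : Finset.Icc m p = insert m (Finset.Icc (m + 1) p) := by
      ext x; simp only [Finset.mem_Icc, Finset.mem_insert]; omega
    rw [hins, Finset.sum_insert (by simp only [Finset.mem_Icc]; omega), if_pos hmp,
      ih (m + 1) (by omega) (by omega)]
    ring

lemma abel_sum (lam : ℕ → ℝ) (a : ℕ → ℝ) (p : ℕ) :
    ∑ k ∈ Finset.Icc 1 p, lam k * a k
      = ∑ k ∈ Finset.Icc 1 p,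
          (lam k - if k < p then lam (k + 1) else 0) * ∑ m ∈ Finset.Icc 1 k, a m := by
  set c : ℕ → ℝ := fun k => lam k - if k < p then lam (k + 1) else 0 with hc
  have step1 : ∀ k ∈ Finset.Icc 1 p,
      c k * ∑ m ∈ Finset.Icc 1 k, a m
        = ∑ m ∈ Finset.Icc 1 p, (if m ≤ k then c k * a m else 0) := by
    intro k hk
    simp only [Finset.mem_Icc] at hk
    have hfilter : Finset.Icc 1 k = (Finset.Icc 1 p).filter (fun m => m ≤ k) := by
      ext x; simp only [Finset.mem_Icc, Finset.mem_filter]; omega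
    rw [Finset.mul_sum, hfilter, Finset.sum_filter]
  symm
  calc ∑ k ∈ Finset.Icc 1 p, c k * ∑ m ∈ Finset.Icc 1 k, a m
      = ∑ k ∈ Finset.Icc 1 p, ∑ m ∈ Finset.Icc 1 p, (if m ≤ k then c k * a m else 0) :=
        Finset.sum_congr rfl step1
    _ = ∑ m ∈ Finset.Icc 1 p, ∑ k ∈ Finset.Icc 1 p, (if m ≤ k then c k * a m else 0) :=
        Finset.sum_comm
    _ = ∑ m ∈ Finset.Icc 1 p, lam m * a m := by
        refine Finset.sum_congr rfl fun m hm => ?_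
        simp only [Finset.mem_Icc] at hm
        have hfilter : Finset.Icc m p = (Finset.Icc 1 p).filter (fun k => m ≤ k) := by
          ext x; simp only [Finset.mem_Icc, Finset.mem_filter]; omega
        have h2 : ∑ k ∈ Finset.Icc 1 p, (if m ≤ k then c k * a m else 0)
            = ∑ k ∈ Finset.Icc m p, c k * a m := by
          rw [hfilter, Finset.sum_filter]
        rw [h2, ← Finset.sum_mul, tele lam p (p - m) m hm.1 (by omega)]


lemma penalty_drop (lam : ℕ → ℝ)
    (hmono : ∀ i j, 1 ≤ i → i ≤ j → j ≤ p → lam j ≤ lam i)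
    (hnonneg : ∀ i, 1 ≤ i → i ≤ p → 0 ≤ lam i)
    (bhat b' : Fin p → ℝ) (r : ℕ)
    (hr : r = (Finset.univ.filter (fun j => bhat j ≠ 0)).card)
    (hr1 : 1 ≤ r)
    (hle : ∀ j, |b' j| ≤ |bhat j|) (t : ℝ)
    (hsum : ∑ j, |b' j| = ∑ j, |bhat j| - t) :
    ∑ k ∈ Finset.Icc 1 p, lam k * sAbs b' k
      ≤ ∑ k ∈ Finset.Icc 1 p, lam k * sAbs bhat k - lam r * t := by
  set c : ℕ → ℝ := fun k => lam k - if k < p then lam (k + 1) else 0 with hcdef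
  have hrp : r ≤ p := by
    rw [hr]
    simpa using Finset.card_le_univ (Finset.univ.filter (fun j : Fin p => bhat j ≠ 0))
  have hc : ∀ k, 1 ≤ k → k ≤ p → 0 ≤ c k := by
    intro k h1 h2
    by_cases hkp : k < p
    · simp only [hcdef, if_pos hkp, sub_nonneg]
      exact hmono k (k + 1) h1 (Nat.le_succ k) hkp
    · simp only [hcdef, if_neg hkp, sub_zero]
      exact hnonneg k h1 h2
  have key : ∀ k ∈ Finset.Icc 1 p,
      c k * (∑ m ∈ Finset.Icc 1 k, sAbs b' m)
        ≤ c k * ((∑ m ∈ Finset.Icc 1 k, sAbs bhat m) - if r ≤ k then t else 0) := by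
    intro k hk
    simp only [Finset.mem_Icc] at hk
    refine mul_le_mul_of_nonneg_left ?_ (hc k hk.1 hk.2)
    have e1 : ∑ m ∈ Finset.Icc 1 k, sAbs b' m
        = ∑ j ∈ Finset.univ.filter (fun j : Fin p => (j : ℕ) < k), sortedAbs b' j := by
      simpa using sum_Icc_sAbs b' (fun _ => (1 : ℝ)) hk.2
    have e2 : ∑ m ∈ Finset.Icc 1 k, sAbs bhat m
        = ∑ j ∈ Finset.univ.filter (fun j : Fin p => (j : ℕ) < k), sortedAbs bhat j := by
      simpa using sum_Icc_sAbs bhat (fun _ => (1 : ℝ)) hk.2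
    by_cases hrk : r ≤ k
    · rw [if_pos hrk, e1, e2]
      have h1 : ∑ j ∈ Finset.univ.filter (fun j : Fin p => (j : ℕ) < k), sortedAbs b' j
          ≤ ∑ j, sortedAbs b' j :=
        Finset.sum_le_sum_of_subset_of_nonneg (Finset.filter_subset _ _)
          (fun j _ _ => sortedAbs_nonneg b' j)
      have h2 : ∑ j ∈ Finset.univ.filter (fun j : Fin p => (j : ℕ) < k), sortedAbs bhat j
          = ∑ j, sortedAbs bhat j := by
        rw [← Finset.sum_filter_add_sum_filter_not Finset.univ
          (fun j : Fin p => (j : ℕ) < k) (sortedAbs bhat)]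
        have hz : ∑ j ∈ Finset.univ.filter (fun j : Fin p => ¬ (j : ℕ) < k),
            sortedAbs bhat j = 0 :=
          Finset.sum_eq_zero (fun j hj => sortedAbs_eq_zero bhat r hr j
            (by simp only [Finset.mem_filter, Finset.mem_univ, true_and] at hj; omega))
        rw [hz, add_zero]
      have h3 := sum_sortedAbs b'
      have h4 := sum_sortedAbs bhat
      rw [h2]
      linarith
    · rw [if_neg hrk, sub_zero, e1, e2]
      set B := (Finset.univ.filter (fun j : Fin p => (j : ℕ) < k)).image (eAbs b') with hB
      have hcard : B.card = k := by
        rw [hB, Finset.card_image_of_injective _ (eAbs b').injective, card_filter_lt hk.2]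
      calc ∑ j ∈ Finset.univ.filter (fun j : Fin p => (j : ℕ) < k), sortedAbs b' j
          = ∑ j ∈ B, |b' j| := by
            rw [hB, Finset.sum_image (fun x _ y _ h => (eAbs b').injective h)]
            exact Finset.sum_congr rfl fun j _ => sortedAbs_eq b' j
        _ ≤ ∑ j ∈ B, |bhat j| := Finset.sum_le_sum (fun j _ => hle j)
        _ ≤ ∑ j ∈ Finset.univ.filter (fun j : Fin p => (j : ℕ) < B.card),
              sortedAbs bhat j := sum_abs_le_topk bhat B
        _ = ∑ j ∈ Finset.univ.filter (fun j : Fin p => (j : ℕ) < k),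
              sortedAbs bhat j := by rw [hcard]
  have hite : ∑ k ∈ Finset.Icc 1 p, c k * (if r ≤ k then t else 0) = lam r * t := by
    have h1 : ∀ k, c k * (if r ≤ k then t else 0) = if r ≤ k then c k * t else 0 := by
      intro k; by_cases h : r ≤ k <;> simp [h]
    simp only [h1]
    have hfilter : Finset.Icc r p = (Finset.Icc 1 p).filter (fun k => r ≤ k) := by
      ext x; simp only [Finset.mem_Icc, Finset.mem_filter]; omega
    rw [← Finset.sum_filter, ← hfilter, ← Finset.sum_mul, tele lam p (p - r) r hr1 (by omega)]
  calc ∑ k ∈ Finset.Icc 1 p, lam k * sAbs b' k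
      = ∑ k ∈ Finset.Icc 1 p, c k * ∑ m ∈ Finset.Icc 1 k, sAbs b' m :=
        abel_sum lam (sAbs b') p
    _ ≤ ∑ k ∈ Finset.Icc 1 p,
          c k * ((∑ m ∈ Finset.Icc 1 k, sAbs bhat m) - if r ≤ k then t else 0) :=
        Finset.sum_le_sum key
    _ = ∑ k ∈ Finset.Icc 1 p, c k * ∑ m ∈ Finset.Icc 1 k, sAbs bhat m
          - ∑ k ∈ Finset.Icc 1 p, c k * (if r ≤ k then t else 0) := by
        rw [← Finset.sum_sub_distrib]
        exact Finset.sum_congr rfl fun k _ => by ring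
    _ = ∑ k ∈ Finset.Icc 1 p, lam k * sAbs bhat k - lam r * t := by
        rw [hite, ← abel_sum lam (sAbs bhat) p]

end SlopeAux

/-- at a minimizer `b̂` of the SLOPE-type objective
`l(b) + ∑ λᵢ |b|₍ᵢ₎`, if `b̂ᵢ ≠ 0` and `r` is the number of nonzero entries of
`b̂`, then `sgn(b̂ᵢ)·Uᵢ(b̂) ≥ λ_r`; in particular `|Uᵢ(b̂)| ≥ λ_r` and `Uᵢ(b̂)`
has the same sign as `b̂ᵢ` whenever `λ_r > 0`.  Here `U(b) = -∇l(b)`. -/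
theorem slope_score_at_nonzero {p : ℕ} (l : (Fin p → ℝ) → ℝ)
    (hconv : ConvexOn ℝ Set.univ l) (hdiff : Differentiable ℝ l)
    (lam : ℕ → ℝ)
    (hmono : ∀ i j, 1 ≤ i → i ≤ j → j ≤ p → lam j ≤ lam i)
    (hnonneg : ∀ i, 1 ≤ i → i ≤ p → 0 ≤ lam i)
    (bhat : Fin p → ℝ)
    (hmin : ∀ b, l bhat + ∑ i ∈ Finset.Icc 1 p, lam i * sAbs bhat i ≤
                 l b + ∑ i ∈ Finset.Icc 1 p, lam i * sAbs b i)
    (r : ℕ) (hr : r = (Finset.univ.filter (fun i => bhat i ≠ 0)).card)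
    (U : Fin p → ℝ) (hU : ∀ i, U i = -(fderiv ℝ l bhat (Pi.single i 1)))
    (i : Fin p) (hi : bhat i ≠ 0) :
    lam r ≤ Real.sign (bhat i) * U i ∧ lam r ≤ |U i| ∧
      (0 < lam r → Real.sign (U i) = Real.sign (bhat i)) := by
  classical
  set s : ℝ := Real.sign (bhat i) with hs
  have habs : 0 < |bhat i| := abs_pos.mpr hi
  set d : Fin p → ℝ := fun j => if j = i then -s else 0 with hd
  have hr1 : 1 ≤ r := by
    rw [hr]
    refine Finset.card_pos.mpr ⟨i, ?_⟩
    simp [hi]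
  have habs' : ∀ t : ℝ, 0 ≤ t → t ≤ |bhat i| → |bhat i - t * s| = |bhat i| - t := by
    intro t ht0 ht1
    rcases hi.lt_or_gt with hneg | hpos
    · rw [hs, Real.sign_of_neg hneg]
      rw [abs_of_neg hneg] at ht1 ⊢
      rw [abs_of_nonpos (by linarith)]
      ring
    · rw [hs, Real.sign_of_pos hpos]
      rw [abs_of_pos hpos] at ht1 ⊢
      rw [abs_of_nonneg (by linarith)]
      ring
  have hkey : ∀ t : ℝ, 0 < t → t ≤ |bhat i| →
      lam r * t ≤ l (bhat + t • d) - l bhat := by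
    intro t ht0 ht1
    set b' : Fin p → ℝ := bhat + t • d with hb'
    have hb'j : ∀ j, b' j = if j = i then bhat i - t * s else bhat j := by
      intro j
      by_cases hj : j = i <;> simp [hb', hd, hj] <;> ring
    have hle : ∀ j, |b' j| ≤ |bhat j| := by
      intro j
      rw [hb'j j]
      by_cases hj : j = i
      · rw [if_pos hj, hj, habs' t ht0.le ht1]; linarith
      · rw [if_neg hj]
    have hsumb : ∑ j, |b' j| = ∑ j, |bhat j| - t := by
      have hterm : ∀ j, |b' j| = |bhat j| + (if j = i then -t else 0) := by
        intro j
        rw [hb'j j]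
        by_cases hj : j = i
        · rw [if_pos hj, if_pos hj, hj, habs' t ht0.le ht1]; ring
        · rw [if_neg hj, if_neg hj]; ring
      rw [Finset.sum_congr rfl (fun j _ => hterm j), Finset.sum_add_distrib,
        Finset.sum_ite_eq' Finset.univ i (fun _ => -t)]
      simp only [Finset.mem_univ, if_true]
      ring
    have hpen := penalty_drop lam hmono hnonneg bhat b' r hr hr1 hle t hsumb
    have hm := hmin b'
    linarith
  have hDcurve : HasDerivAt (fun t : ℝ => bhat + t • d) d 0 := by
    simpa using ((hasDerivAt_id (0 : ℝ)).smul_const d).const_add bhat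
  have hgl : HasDerivAt (fun t : ℝ => l (bhat + t • d)) (fderiv ℝ l bhat d) 0 := by
    have hf : HasFDerivAt l (fderiv ℝ l bhat) (bhat + (0 : ℝ) • d) := by
      simpa using (hdiff bhat).hasFDerivAt
    exact hf.comp_hasDerivAt 0 hDcurve
  have hslope := hasDerivAt_iff_tendsto_slope.mp hgl
  have hslope' : Filter.Tendsto (slope (fun t : ℝ => l (bhat + t • d)) 0)
      (nhdsWithin 0 (Set.Ioi 0)) (nhds (fderiv ℝ l bhat d)) :=
    hslope.mono_left (nhdsWithin_mono 0 (fun x hx => ne_of_gt hx))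
  have hd_le : lam r ≤ fderiv ℝ l bhat d := by
    refine ge_of_tendsto hslope' ?_
    filter_upwards [Ioc_mem_nhdsGT_of_mem (Set.mem_Ico.mpr ⟨le_refl (0:ℝ), habs⟩)] with t ht
    have h1 := hkey t ht.1 ht.2
    have hg0 : l (bhat + (0:ℝ) • d) = l bhat := by norm_num
    rw [slope_def_field]
    show lam r ≤ (l (bhat + t • d) - l (bhat + (0:ℝ) • d)) / (t - 0)
    rw [hg0, sub_zero, le_div_iff₀ ht.1]
    linarith
  have hdsingle : d = (-s) • (Pi.single i (1:ℝ) : Fin p → ℝ) := by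
    funext j
    by_cases hj : j = i
    · simp [hd, Pi.single_apply, hj]
    · simp [hd, Pi.single_apply, hj]
  have hDval : fderiv ℝ l bhat d = s * U i := by
    rw [hdsingle, map_smul]
    have h2 : (fderiv ℝ l bhat) (Pi.single i (1:ℝ)) = -U i := by rw [hU i]; ring
    rw [h2, smul_eq_mul]
    ring
  rw [hDval] at hd_le
  have hs1 : |s| = 1 := by
    rcases hi.lt_or_gt with hneg | hpos
    · rw [hs, Real.sign_of_neg hneg]; norm_num
    · rw [hs, Real.sign_of_pos hpos]; norm_num
  refine ⟨hd_le, ?_, ?_⟩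
  · calc lam r ≤ s * U i := hd_le
      _ ≤ |s * U i| := le_abs_self _
      _ = |U i| := by rw [abs_mul, hs1, one_mul]
  · intro hpos
    rcases hi.lt_or_gt with hneg | hposb
    · have hsneg : s = -1 := by rw [hs, Real.sign_of_neg hneg]
      rw [hsneg] at hd_le
      have hUneg : U i < 0 := by linarith
      rw [Real.sign_of_neg hUneg, hs, Real.sign_of_neg hneg]
    · have hspos : s = 1 := by rw [hs, Real.sign_of_pos hposb]
      rw [hspos] at hd_le
      have hUpos : 0 < U i := by linarith
      rw [Real.sign_of_pos hUpos, hs, Real.sign_of_pos hposb]
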